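/- For all n ≥ 1, the number of Dumont permutations of the fourth kind of length 2n avoiding the pattern 1342 equals 2^(n-1). -/

import Mathlib

/-- `π` contains the pattern `q` (a length-`k` sequence of distinct values given
as a function `Fin k → Fin k`) if some subsequence of `π` is order-isomorphic to `q`. -/
def PatternContains {n k : ℕ} (π : Equiv.Perm (Fin n)) (q : Fin k → Fin k) : Prop :=
  ∃ f : Fin k → Fin n, StrictMono f ∧ ∀ a b : Fin k, q a < q b ↔ π (f a) < π (f b)

/-- `π` avoids the pattern `q`. -/
def Avoids {n k : ℕ} (π : Equiv.Perm (Fin n)) (q : Fin k → Fin k) : Prop :=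
  ¬ PatternContains π q

/-- A Dumont permutation of the fourth kind of size `2n` (0-based indexing:
position `i` and value `π i` correspond to 1-based position `i+1` and value `π i + 1`):
every deficiency occurs at an even (1-based) position and has an even (1-based) value. -/
def IsDumont4 (n : ℕ) (π : Equiv.Perm (Fin (2 * n))) : Prop :=
  ∀ i : Fin (2 * n), (π i : ℕ) < (i : ℕ) → Even ((i : ℕ) + 1) ∧ Even ((π i : ℕ) + 1)

def p1234 : Fin 4 → Fin 4 := ![0, 1, 2, 3]
def p1342 : Fin 4 → Fin 4 := ![0, 2, 3, 1]
def p1432 : Fin 4 → Fin 4 := ![0, 3, 2, 1]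
def p1324 : Fin 4 → Fin 4 := ![0, 2, 1, 3]
def p1243 : Fin 4 → Fin 4 := ![0, 1, 3, 2]
def p1423 : Fin 4 → Fin 4 := ![0, 3, 1, 2]
def p231 : Fin 3 → Fin 3 := ![1, 2, 0]
def p321 : Fin 3 → Fin 3 := ![2, 1, 0]
def p213 : Fin 3 → Fin 3 := ![1, 0, 2]
def p312 : Fin 3 → Fin 3 := ![2, 0, 1]

/-! ### Auxiliary development -/

/-- The condition `σ i ≥ i - 1` on a permutation of `Fin N`. -/
def Scond {N : ℕ} (σ : Equiv.Perm (Fin N)) : Prop := ∀ i : Fin N, (i : ℕ) ≤ (σ i : ℕ) + 1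

lemma scond_symm {N : ℕ} {σ : Equiv.Perm (Fin N)} (hS : Scond σ) (w : Fin N) :
    (σ.symm w : ℕ) ≤ (w : ℕ) + 1 := by
  have := hS (σ.symm w)
  simpa using this

/-- Pigeonhole: at most one position `≤ k` can carry a value `≥ k`, provided all
values `< k` sit at positions `≤ k`. -/
lemma cardH {N : ℕ} (σ : Equiv.Perm (Fin N)) (k : ℕ) (hk : k < N)
    (h : ∀ w : Fin N, (w : ℕ) < k → ((σ.symm w : ℕ) ≤ k))
    (p q : Fin N) (hpq : p ≠ q) (hp : (p : ℕ) ≤ k) (hq : (q : ℕ) ≤ k)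
    (hvp : k ≤ (σ p : ℕ)) (hvq : k ≤ (σ q : ℕ)) : False := by
  set K : Fin N := ⟨k, hk⟩ with hK
  have hsub : insert p (insert q ((Finset.Iio K).image σ.symm)) ⊆ Finset.Iic K := by
    intro x hx
    simp only [Finset.mem_insert, Finset.mem_image, Finset.mem_Iio] at hx
    rcases hx with rfl | rfl | ⟨w, hw, rfl⟩
    · exact Finset.mem_Iic.mpr (Fin.le_def.mpr hp)
    · exact Finset.mem_Iic.mpr (Fin.le_def.mpr hq)
    · have hw' : (w : ℕ) < k := hw
      exact Finset.mem_Iic.mpr (Fin.le_def.mpr (h w hw'))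
  have hpnot : p ∉ insert q ((Finset.Iio K).image σ.symm) := by
    simp only [Finset.mem_insert, Finset.mem_image, Finset.mem_Iio]
    push_neg
    refine ⟨hpq, ?_⟩
    rintro w hw rfl
    simp only [Equiv.apply_symm_apply] at hvp
    have hw' : (w : ℕ) < k := hw
    omega
  have hqnot : q ∉ (Finset.Iio K).image σ.symm := by
    simp only [Finset.mem_image, Finset.mem_Iio]
    rintro ⟨w, hw, rfl⟩
    simp only [Equiv.apply_symm_apply] at hvq
    have hw' : (w : ℕ) < k := hw
    omega
  have hcard := Finset.card_le_card hsub
  rw [Finset.card_insert_of_notMem hpnot, Finset.card_insert_of_notMem hqnot,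
    Finset.card_image_of_injective _ σ.symm.injective, Fin.card_Iio, Fin.card_Iic] at hcard
  simp at hcard

/-- Structure lemma: if `σ i > s ≥ i` then `σ (s+1) = s`. -/
lemma structureLemma {N : ℕ} (σ : Equiv.Perm (Fin N)) (hS : Scond σ) :
    ∀ s : ℕ, ∀ i : Fin N, (i : ℕ) ≤ s → s < (σ i : ℕ) →
      ∃ hs : s + 1 < N, (σ ⟨s + 1, hs⟩ : ℕ) = s := by
  intro s
  induction s using Nat.strong_induction_on with
  | _ s IH =>
    intro i his hsi
    have hσi : (σ i : ℕ) < N := (σ i).isLt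
    have hsn : s < N := by omega
    have hs1 : s + 1 < N := by omega
    set p : Fin N := σ.symm ⟨s, hsn⟩ with hp
    have hps : (σ p : ℕ) = s := by simp [hp]
    have hple : (p : ℕ) ≤ s + 1 := by simpa using scond_symm hS ⟨s, hsn⟩
    refine ⟨hs1, ?_⟩
    by_cases hcase : (p : ℕ) = s + 1
    · have : p = ⟨s + 1, hs1⟩ := by apply Fin.ext; simp only [Fin.val_mk]; omega
      rw [← this]; exact hps
    exfalso
    have hple' : (p : ℕ) ≤ s := by omega
    rcases lt_trichotomy ((p : ℕ)) ((i : ℕ)) with h1 | h2 | h3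
    · refine cardH σ (i : ℕ) i.isLt (fun w hw => by
        have := scond_symm hS w; omega) p i (fun he => by rw [he] at h1; omega)
        (by omega) le_rfl (by omega) (by omega)
    · have : p = i := Fin.ext h2
      rw [this] at hps; omega
    · have hlt : (p : ℕ) - 1 < s := by omega
      obtain ⟨hh, hval⟩ := IH ((p : ℕ) - 1) hlt i (by omega) (by omega)
      have : (⟨(p : ℕ) - 1 + 1, hh⟩ : Fin N) = p := by
        apply Fin.ext; simp only [Fin.val_mk]; omega
      rw [this] at hval
      omega

lemma no231sigma {N : ℕ} (σ : Equiv.Perm (Fin N)) (hS : Scond σ) (b c : Fin N)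
    (hbc : b < c) (h1 : (c : ℕ) ≤ (σ b : ℕ)) (h2 : (σ b : ℕ) < (σ c : ℕ)) : False := by
  have hbc' : (b : ℕ) < (c : ℕ) := hbc
  obtain ⟨hh, hval⟩ := structureLemma σ hS ((c : ℕ) - 1) b (by omega) (by omega)
  have : (⟨(c : ℕ) - 1 + 1, hh⟩ : Fin N) = c := by
    apply Fin.ext; simp only [Fin.val_mk]; omega
  rw [this] at hval
  omega

/-- The claimed characterization: even (0-based) positions are fixed, odd positions
carry values `≥ position - 2`. -/
def Tcond {m : ℕ} (π : Equiv.Perm (Fin m)) : Prop :=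
  (∀ i : Fin m, Even (i : ℕ) → π i = i) ∧
    (∀ i : Fin m, ¬ Even (i : ℕ) → (i : ℕ) ≤ (π i : ℕ) + 2)

def No231 {m : ℕ} (π : Equiv.Perm (Fin m)) : Prop :=
  ∀ b c d : Fin m, b < c → c < d → (π d : ℕ) < (π b : ℕ) → (π b : ℕ) < (π c : ℕ) → False

lemma Todd {m : ℕ} {π : Equiv.Perm (Fin m)} (hT : Tcond π) {i : Fin m} (hi : ¬ Even (i : ℕ)) :
    ¬ Even ((π i : ℕ)) := by
  intro he
  have h1 : π (π i) = π i := hT.1 (π i) he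
  have := π.injective h1
  rw [this] at he
  exact hi he

lemma two_mul_add_one_lt {n : ℕ} (i : Fin n) : 2 * (i : ℕ) + 1 < 2 * n := by omega

/-- The permutation induced on odd positions (divided by two). -/
def halfFun {n : ℕ} (π : Equiv.Perm (Fin (2 * n))) : Fin n → Fin n := fun i =>
  ⟨(π ⟨2 * (i : ℕ) + 1, two_mul_add_one_lt i⟩ : ℕ) / 2, by
    have := (π ⟨2 * (i : ℕ) + 1, two_mul_add_one_lt i⟩).isLt; omega⟩

lemma halfFun_spec {n : ℕ} (π : Equiv.Perm (Fin (2 * n))) (hT : Tcond π) (i : Fin n) :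
    (π ⟨2 * (i : ℕ) + 1, two_mul_add_one_lt i⟩ : ℕ) = 2 * (halfFun π i : ℕ) + 1 := by
  have hodd : ¬ Even ((π ⟨2 * (i : ℕ) + 1, two_mul_add_one_lt i⟩ : ℕ)) := by
    apply Todd hT
    simp [Nat.even_add_one, Nat.even_mul]
  rw [Nat.not_even_iff] at hodd
  simp only [halfFun]
  omega

lemma halfFun_inj {n : ℕ} (π : Equiv.Perm (Fin (2 * n))) (hT : Tcond π) :
    Function.Injective (halfFun π) := by
  intro i j hij
  have h1 := halfFun_spec π hT i
  have h2 := halfFun_spec π hT j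
  have hv : (⟨2 * (i : ℕ) + 1, two_mul_add_one_lt i⟩ : Fin (2 * n)) =
      ⟨2 * (j : ℕ) + 1, two_mul_add_one_lt j⟩ := by
    apply π.injective
    apply Fin.val_injective
    rw [h1, h2, hij]
  have hvv : 2 * (i : ℕ) + 1 = 2 * (j : ℕ) + 1 := by
    simpa using congrArg Fin.val hv
  exact Fin.ext (by omega)

noncomputable def halfPerm {n : ℕ} (π : Equiv.Perm (Fin (2 * n))) (hT : Tcond π) :
    Equiv.Perm (Fin n) :=
  Equiv.ofBijective (halfFun π) (Finite.injective_iff_bijective.mp (halfFun_inj π hT))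

lemma halfPerm_scond {n : ℕ} (π : Equiv.Perm (Fin (2 * n))) (hT : Tcond π) :
    Scond (halfPerm π hT) := by
  intro i
  have h1 := halfFun_spec π hT i
  have h2 := hT.2 ⟨2 * (i : ℕ) + 1, two_mul_add_one_lt i⟩
    (by simp [Nat.even_add_one, Nat.even_mul])
  have : ((halfPerm π hT) i : ℕ) = (halfFun π i : ℕ) := rfl
  rw [this]
  simp only [Fin.val_mk] at h2
  omega

lemma Tno231 {n : ℕ} (π : Equiv.Perm (Fin (2 * n))) (hT : Tcond π) : No231 π := by
  intro b c d hbc hcd hdb hbc2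
  have hbc' : (b : ℕ) < (c : ℕ) := hbc
  have hcd' : (c : ℕ) < (d : ℕ) := hcd
  have hd2 : (d : ℕ) ≤ (π d : ℕ) + 2 := by
    by_cases hd : Even ((d : ℕ))
    · rw [hT.1 d hd]; omega
    · exact hT.2 d hd
  have hbodd : ¬ Even ((b : ℕ)) := by
    intro hb
    have := hT.1 b hb
    rw [this] at hdb hbc2
    omega
  have hcodd : ¬ Even ((c : ℕ)) := by
    intro hc
    have := hT.1 c hc
    rw [this] at hbc2
    omega
  rw [Nat.not_even_iff] at hbodd hcodd
  have hb2 : 2 * ((b : ℕ) / 2) + 1 = (b : ℕ) := by omega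
  have hc2 : 2 * ((c : ℕ) / 2) + 1 = (c : ℕ) := by omega
  set σ := halfPerm π hT with hσ
  have hS := halfPerm_scond π hT
  set β : Fin n := ⟨(b : ℕ) / 2, by have := b.isLt; omega⟩ with hβ
  set γ : Fin n := ⟨(c : ℕ) / 2, by have := c.isLt; omega⟩ with hγ
  have hπb : (π b : ℕ) = 2 * (σ β : ℕ) + 1 := by
    have := halfFun_spec π hT β
    have heq : (⟨2 * (β : ℕ) + 1, two_mul_add_one_lt β⟩ : Fin (2 * n)) = b :=
      Fin.val_injective (by simp only [hβ, hγ, Fin.val_mk]; omega)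
    rw [heq] at this
    exact this
  have hπc : (π c : ℕ) = 2 * (σ γ : ℕ) + 1 := by
    have := halfFun_spec π hT γ
    have heq : (⟨2 * (γ : ℕ) + 1, two_mul_add_one_lt γ⟩ : Fin (2 * n)) = c :=
      Fin.val_injective (by simp only [hβ, hγ, Fin.val_mk]; omega)
    rw [heq] at this
    exact this
  exact no231sigma σ hS β γ (by simp only [Fin.lt_def, hβ, hγ, Fin.val_mk]; omega)
    (by simp only [hγ, Fin.val_mk]; omega) (by omega)

lemma contains_of_chain {m : ℕ} (π : Equiv.Perm (Fin m)) (x0 x1 x2 x3 : Fin m)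
    (h01 : x0 < x1) (h12 : x1 < x2) (h23 : x2 < x3)
    (v03 : (π x0 : ℕ) < (π x3 : ℕ)) (v31 : (π x3 : ℕ) < (π x1 : ℕ))
    (v12 : (π x1 : ℕ) < (π x2 : ℕ)) : PatternContains π p1342 := by
  have h02 : x0 < x2 := h01.trans h12
  have h03 : x0 < x3 := h02.trans h23
  have h13 : x1 < x3 := h12.trans h23
  have v01 : (π x0 : ℕ) < (π x1 : ℕ) := v03.trans v31
  have v02 : (π x0 : ℕ) < (π x2 : ℕ) := v01.trans v12
  have v32 : (π x3 : ℕ) < (π x2 : ℕ) := v31.trans v12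
  refine ⟨![x0, x1, x2, x3], ?_, ?_⟩
  · intro a b hab
    match a, b with
    | 0, 1 => exact h01
    | 0, 2 => exact h02
    | 0, 3 => exact h03
    | 1, 2 => exact h12
    | 1, 3 => exact h13
    | 2, 3 => exact h23
    | 0, 0 => exact absurd hab (by decide)
    | 1, 0 => exact absurd hab (by decide)
    | 1, 1 => exact absurd hab (by decide)
    | 2, 0 => exact absurd hab (by decide)
    | 2, 1 => exact absurd hab (by decide)
    | 2, 2 => exact absurd hab (by decide)
    | 3, 0 => exact absurd hab (by decide)
    | 3, 1 => exact absurd hab (by decide)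
    | 3, 2 => exact absurd hab (by decide)
    | 3, 3 => exact absurd hab (by decide)
  · intro a b
    match a, b with
    | 0, 0 => exact iff_of_false (by decide) (lt_irrefl _)
    | 0, 1 => exact iff_of_true (by decide) v01
    | 0, 2 => exact iff_of_true (by decide) v02
    | 0, 3 => exact iff_of_true (by decide) v03
    | 1, 0 => exact iff_of_false (by decide) (Nat.lt_asymm v01)
    | 1, 1 => exact iff_of_false (by decide) (lt_irrefl _)
    | 1, 2 => exact iff_of_true (by decide) v12
    | 1, 3 => exact iff_of_false (by decide) (Nat.lt_asymm v31)
    | 2, 0 => exact iff_of_false (by decide) (Nat.lt_asymm v02)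
    | 2, 1 => exact iff_of_false (by decide) (Nat.lt_asymm v12)
    | 2, 2 => exact iff_of_false (by decide) (lt_irrefl _)
    | 2, 3 => exact iff_of_false (by decide) (Nat.lt_asymm v32)
    | 3, 0 => exact iff_of_false (by decide) (Nat.lt_asymm v03)
    | 3, 1 => exact iff_of_true (by decide) v31
    | 3, 2 => exact iff_of_true (by decide) v32
    | 3, 3 => exact iff_of_false (by decide) (lt_irrefl _)

lemma no231_avoids {m : ℕ} (π : Equiv.Perm (Fin m)) (h : No231 π) : Avoids π p1342 := by
  rintro ⟨f, hmono, hiff⟩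
  have h01 : f 1 < f 2 := hmono (by decide)
  have h12 : f 2 < f 3 := hmono (by decide)
  have h31 : (π (f 3) : ℕ) < (π (f 1) : ℕ) := (hiff 3 1).mp (by decide)
  have h13 : (π (f 1) : ℕ) < (π (f 2) : ℕ) := (hiff 1 2).mp (by decide)
  exact h (f 1) (f 2) (f 3) h01 h12 h31 h13

lemma avoids_no231 {m : ℕ} (hm : 0 < m) (π : Equiv.Perm (Fin m))
    (hz : π ⟨0, hm⟩ = ⟨0, hm⟩) (hA : Avoids π p1342) : No231 π := by
  intro b c d hbc hcd hdb hbc2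
  have hbc' : (b : ℕ) < (c : ℕ) := hbc
  have hcd' : (c : ℕ) < (d : ℕ) := hcd
  have hb0 : 0 < (b : ℕ) := by
    rcases Nat.eq_zero_or_pos (b : ℕ) with h0 | h0
    · have : b = ⟨0, hm⟩ := Fin.ext h0
      rw [this, hz] at hdb hbc2
      simp at hdb
    · exact h0
  have hπz : (π ⟨0, hm⟩ : ℕ) = 0 := by rw [hz]
  have hπd0 : 0 < (π d : ℕ) := by
    rcases Nat.eq_zero_or_pos ((π d : ℕ)) with h0 | h0
    · exfalso
      have : π d = π ⟨0, hm⟩ := by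
        apply Fin.val_injective; rw [hπz, h0]
      have := π.injective this
      rw [this] at hcd'
      simp [Fin.lt_def] at hcd'
    · exact h0
  apply hA
  apply contains_of_chain π ⟨0, hm⟩ b c d
  · exact hb0
  · exact hbc
  · exact hcd
  · omega
  · exact hdb
  · exact hbc2

/-! ### Dumont & avoiding implies Tcond -/

lemma dumont_fix_zero {n : ℕ} (hn : 0 < n) (π : Equiv.Perm (Fin (2 * n)))
    (hD : IsDumont4 n π) : π ⟨0, by omega⟩ = ⟨0, by omega⟩ := by
  have h0 : (0 : ℕ) < 2 * n := by omega
  set Z : Fin (2 * n) := ⟨0, h0⟩ with hZ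
  set p : Fin (2 * n) := π.symm Z with hp
  have hπp : π p = Z := by simp [hp]
  have hpv : (p : ℕ) = 0 := by
    by_contra hne
    have hlt : (π p : ℕ) < (p : ℕ) := by rw [hπp]; simp [hZ]; omega
    have := (hD p hlt).2
    rw [hπp] at this
    simp [hZ] at this
  have : p = Z := Fin.ext (by simp [hZ, hpv])
  rw [← this, hπp, this]

lemma dumont_evens_fixed {n : ℕ} (π : Equiv.Perm (Fin (2 * n)))
    (hD : IsDumont4 n π) (h231 : No231 π) :
    ∀ i : Fin (2 * n), Even (i : ℕ) → π i = i := by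
  have key : ∀ k, ∀ hk : 2 * k < 2 * n, π ⟨2 * k, hk⟩ = ⟨2 * k, hk⟩ := by
    intro k
    induction k using Nat.strong_induction_on with
    | _ k IH =>
      intro hk
      set K : Fin (2 * n) := ⟨2 * k, hk⟩ with hK
      set p : Fin (2 * n) := π.symm K with hp
      have hπp : π p = K := by simp [hp]
      have hKv : (K : ℕ) = 2 * k := rfl
      have hple : (p : ℕ) ≤ 2 * k := by
        by_contra hgt
        push_neg at hgt
        have hlt : (π p : ℕ) < (p : ℕ) := by rw [hπp, hKv]; omega
        have := (hD p hlt).2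
        rw [hπp, hKv] at this
        exact (Nat.not_even_iff.mpr (by omega)) this
      by_cases hpk : (p : ℕ) = 2 * k
      · have hpK : p = K := Fin.ext (by rw [hpk])
        rwa [hpK] at hπp
      · have hplt : (p : ℕ) < 2 * k := by omega
        exfalso
        have hpodd : ¬ Even ((p : ℕ)) := by
          rintro ⟨j, hj⟩
          have h2j : 2 * j < 2 * n := by omega
          have hIH := IH j (by omega) h2j
          have hpe' : p = ⟨2 * j, h2j⟩ := Fin.ext (by simp; omega)
          rw [← hpe'] at hIH
          rw [hIH] at hπp
          rw [hpe'] at hπp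
          have := congrArg Fin.val hπp
          simp [hKv] at this
          omega
        have hppos : p ≠ K := fun he => hpk (by rw [he])
        have hq : 2 * k < (π K : ℕ) := by
          have hne : π K ≠ K := by
            intro he
            exact hppos (π.injective (hπp.trans he.symm))
          rcases lt_trichotomy ((π K : ℕ)) (2 * k) with h | h | h
          · exfalso
            have := (hD K (by rw [hKv]; exact h)).1
            rw [hKv] at this
            exact (Nat.not_even_iff.mpr (by omega)) this
          · exact absurd (Fin.ext (h.trans hKv.symm) : π K = K) hne
          · exact h
        have hexists : ∃ w : Fin (2 * n), (w : ℕ) < 2 * k ∧ 2 * k < (π.symm w : ℕ) := by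
          by_contra hno
          push_neg at hno
          exact cardH π (2 * k) hk (fun w hw => le_of_not_gt (fun hc => by
              have := hno w hw; omega))
            p K hppos (by omega) (le_of_eq hKv) (by rw [hπp, hKv]) (le_of_lt hq)
        obtain ⟨u, hu1, hu2⟩ := hexists
        set d : Fin (2 * n) := π.symm u with hd
        have hπd : π d = u := by simp [hd]
        apply h231 p K d
        · exact hplt
        · exact hu2
        · rw [hπp, hπd, hKv]; exact hu1
        · rw [hπp, hKv]; exact hq
  intro i hie
  obtain ⟨j, hj⟩ := hie
  have h2j : 2 * j < 2 * n := by have := i.isLt; omega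
  have hie' : i = ⟨2 * j, h2j⟩ := Fin.ext (by simp; omega)
  rw [hie']
  exact key j h2j

lemma dumont_tcond {n : ℕ} (hn : 0 < n) (π : Equiv.Perm (Fin (2 * n)))
    (hD : IsDumont4 n π) (hA : Avoids π p1342) : Tcond π := by
  have h0 : (0 : ℕ) < 2 * n := by omega
  have hz := dumont_fix_zero hn π hD
  have h231 := avoids_no231 h0 π hz hA
  have hev := dumont_evens_fixed π hD h231
  refine ⟨hev, ?_⟩
  intro i hi
  by_contra hbad
  push_neg at hbad
  have hwodd : ¬ Even ((π i : ℕ)) := by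
    intro hwe
    have h1 := hev (π i) hwe
    have h2 := π.injective h1
    rw [h2] at hwe
    exact hi hwe
  rw [Nat.not_even_iff] at hwodd
  rw [Nat.not_even_iff] at hi
  have hw4 : (π i : ℕ) + 4 ≤ (i : ℕ) := by omega
  have hb : (π i : ℕ) + 1 < 2 * n := by have := i.isLt; omega
  have hc : (π i : ℕ) + 3 < 2 * n := by have := i.isLt; omega
  set b : Fin (2 * n) := ⟨(π i : ℕ) + 1, hb⟩ with hbdef
  set c : Fin (2 * n) := ⟨(π i : ℕ) + 3, hc⟩ with hcdef
  have hπb : π b = b := hev b (by simp [hbdef, Nat.even_iff]; omega)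
  have hπc : π c = c := hev c (by simp [hcdef, Nat.even_iff]; omega)
  apply h231 b c i
  · show (b : ℕ) < (c : ℕ)
    simp [hbdef, hcdef]
  · show (c : ℕ) < (i : ℕ)
    simp [hcdef]; omega
  · rw [hπb]; simp [hbdef]
  · rw [hπb, hπc]; simp [hbdef, hcdef]

lemma tcond_dumont {n : ℕ} (π : Equiv.Perm (Fin (2 * n))) (hT : Tcond π) :
    IsDumont4 n π := by
  intro i hlt
  have hio : ¬ Even ((i : ℕ)) := by
    intro hie
    have := hT.1 i hie
    rw [this] at hlt
    omega
  have hwo := Todd hT hio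
  rw [Nat.not_even_iff] at hio hwo
  constructor
  · rw [Nat.even_add_one, Nat.even_iff]; omega
  · rw [Nat.even_add_one, Nat.even_iff]; omega

lemma char_iff {n : ℕ} (hn : 0 < n) (π : Equiv.Perm (Fin (2 * n))) :
    (IsDumont4 n π ∧ Avoids π p1342) ↔ Tcond π := by
  constructor
  · rintro ⟨hD, hA⟩
    exact dumont_tcond hn π hD hA
  · intro hT
    exact ⟨tcond_dumont π hT, no231_avoids π (Tno231 π hT)⟩

-- new stuff
lemma half_lt {n : ℕ} (x : Fin (2 * n)) : (x : ℕ) / 2 < n := by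
  have := x.isLt; omega

def doubleFun {n : ℕ} (σ : Equiv.Perm (Fin n)) : Fin (2 * n) → Fin (2 * n) := fun x =>
  if Even (x : ℕ) then x
  else ⟨2 * (σ ⟨(x : ℕ) / 2, half_lt x⟩ : ℕ) + 1, two_mul_add_one_lt _⟩

lemma doubleFun_even {n : ℕ} (σ : Equiv.Perm (Fin n)) {x : Fin (2 * n)}
    (hx : Even ((x : ℕ))) : doubleFun σ x = x := by
  simp [doubleFun, hx]

lemma doubleFun_odd {n : ℕ} (σ : Equiv.Perm (Fin n)) {x : Fin (2 * n)}
    (hx : ¬ Even ((x : ℕ))) :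
    (doubleFun σ x : ℕ) = 2 * (σ ⟨(x : ℕ) / 2, half_lt x⟩ : ℕ) + 1 := by
  simp [doubleFun, hx]

lemma doubleFun_inj {n : ℕ} (σ : Equiv.Perm (Fin n)) : Function.Injective (doubleFun σ) := by
  intro x y hxy
  have hv := congrArg Fin.val hxy
  by_cases hx : Even ((x : ℕ)) <;> by_cases hy : Even ((y : ℕ))
  · rwa [doubleFun_even σ hx, doubleFun_even σ hy] at hxy
  · exfalso
    rw [doubleFun_even σ hx] at hv
    rw [doubleFun_odd σ hy] at hv
    rw [Nat.even_iff] at hx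
    omega
  · exfalso
    rw [doubleFun_even σ hy] at hv
    rw [doubleFun_odd σ hx] at hv
    rw [Nat.even_iff] at hy
    omega
  · rw [doubleFun_odd σ hx, doubleFun_odd σ hy] at hv
    have h1 : σ ⟨(x : ℕ) / 2, half_lt x⟩ = σ ⟨(y : ℕ) / 2, half_lt y⟩ :=
      Fin.val_injective (by omega)
    have h2 := σ.injective h1
    have h3 : (x : ℕ) / 2 = (y : ℕ) / 2 := congrArg Fin.val h2
    rw [Nat.not_even_iff] at hx hy
    exact Fin.val_injective (by omega)

noncomputable def doublePerm {n : ℕ} (σ : Equiv.Perm (Fin n)) : Equiv.Perm (Fin (2 * n)) :=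
  Equiv.ofBijective (doubleFun σ) (Finite.injective_iff_bijective.mp (doubleFun_inj σ))

lemma doublePerm_apply {n : ℕ} (σ : Equiv.Perm (Fin n)) (x : Fin (2 * n)) :
    doublePerm σ x = doubleFun σ x := rfl

lemma doublePerm_tcond {n : ℕ} (σ : Equiv.Perm (Fin n)) (hS : Scond σ) :
    Tcond (doublePerm σ) := by
  constructor
  · intro i hie
    rw [doublePerm_apply, doubleFun, if_pos hie]
  · intro i hio
    rw [doublePerm_apply, doubleFun, if_neg hio]
    have := hS ⟨(i : ℕ) / 2, half_lt i⟩
    rw [Nat.not_even_iff] at hio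
    simp only [Fin.val_mk] at this ⊢
    omega

noncomputable def TtoS {n : ℕ} :
    {π : Equiv.Perm (Fin (2 * n)) // Tcond π} ≃ {σ : Equiv.Perm (Fin n) // Scond σ} where
  toFun := fun p => ⟨halfPerm p.1 p.2, halfPerm_scond p.1 p.2⟩
  invFun := fun s => ⟨doublePerm s.1, doublePerm_tcond s.1 s.2⟩
  left_inv := by
    rintro ⟨π, hT⟩
    apply Subtype.ext
    simp only
    apply Equiv.ext
    intro x
    rw [doublePerm_apply, doubleFun]
    by_cases hx : Even ((x : ℕ))
    · rw [if_pos hx, hT.1 x hx]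
    · rw [if_neg hx]
      apply Fin.val_injective
      simp only [Fin.val_mk]
      have hs : ((halfPerm π hT) ⟨(x : ℕ) / 2, half_lt x⟩ : ℕ) =
          (halfFun π ⟨(x : ℕ) / 2, half_lt x⟩ : ℕ) := rfl
      rw [hs]
      have := halfFun_spec π hT ⟨(x : ℕ) / 2, half_lt x⟩
      rw [Nat.not_even_iff] at hx
      have hxx : (⟨2 * ((⟨(x : ℕ) / 2, half_lt x⟩ : Fin n) : ℕ) + 1,
          two_mul_add_one_lt _⟩ : Fin (2 * n)) = x := by
        apply Fin.val_injective; simp only [Fin.val_mk]; omega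
      rw [hxx] at this
      omega
  right_inv := by
    rintro ⟨σ, hS⟩
    apply Subtype.ext
    simp only
    apply Equiv.ext
    intro i
    apply Fin.val_injective
    have hs : ((halfPerm (doublePerm σ) (doublePerm_tcond σ hS)) i : ℕ) =
        (halfFun (doublePerm σ) i : ℕ) := rfl
    rw [hs]
    simp only [halfFun, Fin.val_mk]
    rw [doublePerm_apply, doubleFun, if_neg (by simp [Nat.even_add_one, Nat.even_mul])]
    have h1 : ((⟨2 * (i : ℕ) + 1, two_mul_add_one_lt i⟩ : Fin (2 * n)) : ℕ) / 2 = (i : ℕ) := by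
      simp only [Fin.val_mk]; omega
    have h2 : (⟨((⟨2 * (i : ℕ) + 1, two_mul_add_one_lt i⟩ : Fin (2 * n)) : ℕ) / 2,
        half_lt _⟩ : Fin n) = i := Fin.val_injective h1
    simp only [Fin.val_mk]
    rw [h2]
    omega

section EncDec
variable {N : ℕ}

def cfun (c : Fin (N - 1) → Bool) : ℕ → Bool := fun s =>
  if h : s < N - 1 then c ⟨s, h⟩ else false

/-- End of the run of `true`s of `c` starting at `i`. -/
def rend (c : Fin (N - 1) → Bool) (i : ℕ) : ℕ :=
  Nat.findGreatest (fun t => ∀ s < t, i ≤ s → cfun c s = true) (N - 1)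

lemma rend_le (c : Fin (N - 1) → Bool) (i : ℕ) : rend c i ≤ N - 1 :=
  Nat.findGreatest_le _

lemma le_rend (c : Fin (N - 1) → Bool) {i : ℕ} (h : i ≤ N - 1) : i ≤ rend c i :=
  Nat.le_findGreatest h (fun s hs his => by omega)

lemma rend_spec (c : Fin (N - 1) → Bool) (i : ℕ) :
    ∀ s < rend c i, i ≤ s → cfun c s = true := by
  rcases Nat.eq_zero_or_pos (rend c i) with h0 | h0
  · intro s hs
    rw [h0] at hs
    omega
  · exact Nat.findGreatest_of_ne_zero rfl h0.ne'

lemma rend_max (c : Fin (N - 1) → Bool) (i : ℕ) {t : ℕ} (h1 : rend c i < t) (h2 : t ≤ N - 1) :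
    ¬ (∀ s < t, i ≤ s → cfun c s = true) :=
  Nat.findGreatest_is_greatest h1 h2

def decFun (c : Fin (N - 1) → Bool) : Fin N → Fin N := fun i =>
  if h : 0 < (i : ℕ) ∧ cfun c ((i : ℕ) - 1) = true then ⟨(i : ℕ) - 1, by have := i.isLt; omega⟩
  else ⟨rend c (i : ℕ), by have := i.isLt; have := rend_le c ((i : ℕ)); omega⟩

lemma decFun_pos (c : Fin (N - 1) → Bool) (i : Fin N)
    (h : 0 < (i : ℕ) ∧ cfun c ((i : ℕ) - 1) = true) : (decFun c i : ℕ) = (i : ℕ) - 1 := by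
  rw [decFun, dif_pos h]

lemma decFun_neg (c : Fin (N - 1) → Bool) (i : Fin N)
    (h : ¬(0 < (i : ℕ) ∧ cfun c ((i : ℕ) - 1) = true)) : (decFun c i : ℕ) = rend c (i : ℕ) := by
  rw [decFun, dif_neg h]

lemma decFun_inj (c : Fin (N - 1) → Bool) : Function.Injective (decFun c) := by
  suffices h : ∀ i j : Fin N, (i : ℕ) < (j : ℕ) → decFun c i = decFun c j → False by
    intro i j hij
    rcases lt_trichotomy ((i : ℕ)) ((j : ℕ)) with h1 | h1 | h1
    · exact (h i j h1 hij).elim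
    · exact Fin.val_injective h1
    · exact (h j i h1 hij.symm).elim
  intro i j hij heq
  have hv := congrArg Fin.val heq
  have hiN : (i : ℕ) ≤ N - 1 := by have := i.isLt; omega
  have hjN : (j : ℕ) ≤ N - 1 := by have := j.isLt; omega
  by_cases hi : 0 < (i : ℕ) ∧ cfun c ((i : ℕ) - 1) = true <;>
    by_cases hj : 0 < (j : ℕ) ∧ cfun c ((j : ℕ) - 1) = true
  · rw [decFun_pos c i hi, decFun_pos c j hj] at hv
    omega
  · rw [decFun_pos c i hi, decFun_neg c j hj] at hv
    have := le_rend c hjN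
    omega
  · rw [decFun_neg c i hi, decFun_pos c j hj] at hv
    -- rend c i = j - 1, cfun c (j-1) = true : contradicts maximality
    apply rend_max c ((i : ℕ)) (t := (j : ℕ)) (by omega) hjN
    intro s hs his
    rcases Nat.lt_or_ge s ((j : ℕ) - 1) with h1 | h1
    · exact rend_spec c ((i : ℕ)) s (by omega) his
    · have : s = (j : ℕ) - 1 := by omega
      rw [this]
      exact hj.2
  · rw [decFun_neg c i hi, decFun_neg c j hj] at hv
    have h1 := le_rend c hjN
    have h2 : cfun c ((j : ℕ) - 1) = true :=
      rend_spec c ((i : ℕ)) ((j : ℕ) - 1) (by omega) (by omega)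
    push_neg at hj
    have := hj (by omega)
    exact this h2

noncomputable def decPerm (c : Fin (N - 1) → Bool) : Equiv.Perm (Fin N) :=
  Equiv.ofBijective (decFun c) (Finite.injective_iff_bijective.mp (decFun_inj c))

lemma decPerm_apply (c : Fin (N - 1) → Bool) (i : Fin N) : decPerm c i = decFun c i := rfl

lemma decPerm_scond (c : Fin (N - 1) → Bool) : Scond (decPerm c) := by
  intro i
  rw [decPerm_apply]
  by_cases h : 0 < (i : ℕ) ∧ cfun c ((i : ℕ) - 1) = true
  · rw [decFun_pos c i h]; omega
  · rw [decFun_neg c i h]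
    have := le_rend c (show (i : ℕ) ≤ N - 1 by have := i.isLt; omega)
    omega

def encFun (σ : Equiv.Perm (Fin N)) : Fin (N - 1) → Bool := fun s =>
  decide ((σ ⟨(s : ℕ) + 1, by have := s.isLt; omega⟩ : ℕ) = (s : ℕ))

lemma cfun_enc (σ : Equiv.Perm (Fin N)) (s : ℕ) (hs : s < N - 1) :
    cfun (encFun σ) s = decide ((σ ⟨s + 1, by omega⟩ : ℕ) = s) := by
  rw [cfun, dif_pos hs]
  rfl

lemma dec_enc (σ : Equiv.Perm (Fin N)) (hS : Scond σ) (i : Fin N) :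
    decFun (encFun σ) i = σ i := by
  apply Fin.val_injective
  by_cases hi : 0 < (i : ℕ) ∧ cfun (encFun σ) ((i : ℕ) - 1) = true
  · rw [decFun_pos _ i hi]
    obtain ⟨hi0, hic⟩ := hi
    have hlt : (i : ℕ) - 1 < N - 1 := by
      by_contra hge
      rw [cfun, dif_neg hge] at hic
      exact Bool.false_ne_true hic
    rw [cfun_enc σ _ hlt] at hic
    have := of_decide_eq_true hic
    have hmk : (⟨(i : ℕ) - 1 + 1, by omega⟩ : Fin N) = i := Fin.val_injective (by
      simp only [Fin.val_mk]; omega)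
    rw [hmk] at this
    omega
  · rw [decFun_neg _ i hi]
    have hσi : (i : ℕ) ≤ (σ i : ℕ) := by
      rcases Nat.eq_zero_or_pos ((i : ℕ)) with h0 | h0
      · omega
      · push_neg at hi
        have hic := hi h0
        have hlt : (i : ℕ) - 1 < N - 1 := by have := i.isLt; omega
        rw [cfun_enc σ _ hlt] at hic
        rw [ne_eq, decide_eq_true_eq] at hic
        have hmk : (⟨(i : ℕ) - 1 + 1, by omega⟩ : Fin N) = i := Fin.val_injective (by
          simp only [Fin.val_mk]; omega)
        rw [hmk] at hic
        have := hS i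
        omega
    apply le_antisymm
    · -- rend ≤ σ i
      by_contra hgt
      push_neg at hgt
      have hcs := rend_spec (encFun σ) ((i : ℕ)) ((σ i : ℕ)) hgt hσi
      have hlt : (σ i : ℕ) < N - 1 := by
        by_contra hge
        rw [cfun, dif_neg hge] at hcs
        exact Bool.false_ne_true hcs
      rw [cfun_enc σ _ hlt] at hcs
      rw [decide_eq_true_eq] at hcs
      have := σ.injective (Fin.val_injective hcs : σ ⟨(σ i : ℕ) + 1, by omega⟩ = σ i)
      have hv := congrArg Fin.val this
      simp only [Fin.val_mk] at hv
      omega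
    · -- σ i ≤ rend
      apply Nat.le_findGreatest (by have := (σ i).isLt; omega)
      intro s hs his
      obtain ⟨hs1, hval⟩ := structureLemma σ hS s i his hs
      have hlt : s < N - 1 := by omega
      rw [cfun_enc σ _ hlt, decide_eq_true_eq]
      exact hval

end EncDec

lemma enc_dec {N : ℕ} (c : Fin (N - 1) → Bool) : encFun (decPerm c) = c := by
  funext s
  have hs1 : (s : ℕ) + 1 < N := by have := s.isLt; omega
  have h0 : (0 : ℕ) < (s : ℕ) + 1 := by omega
  show decide ((decPerm c ⟨(s : ℕ) + 1, hs1⟩ : ℕ) = (s : ℕ)) = c s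
  rw [decPerm_apply]
  have hsub : ((s : ℕ) + 1) - 1 = (s : ℕ) := by omega
  have hcf : cfun c (((s : ℕ) + 1) - 1) = c s := by
    rw [hsub, cfun, dif_pos s.isLt, Fin.eta]
  by_cases hc : c s = true
  · rw [decFun_pos c _ ⟨h0, by rw [hcf]; exact hc⟩]
    rw [hc, decide_eq_true_eq]
    simp only [Fin.val_mk]
    omega
  · have hcbool : c s = false := Bool.not_eq_true _ ▸ hc
    rw [decFun_neg c _ (by rw [hcf, hcbool]; simp)]
    rw [hcbool]
    have hge := le_rend c (show (s : ℕ) + 1 ≤ N - 1 by have := s.isLt; omega)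
    simp only [Fin.val_mk] at hge ⊢
    rw [decide_eq_false]
    omega

noncomputable def StoB {N : ℕ} :
    {σ : Equiv.Perm (Fin N) // Scond σ} ≃ (Fin (N - 1) → Bool) where
  toFun := fun s => encFun s.1
  invFun := fun c => ⟨decPerm c, decPerm_scond c⟩
  left_inv := by
    rintro ⟨σ, hS⟩
    apply Subtype.ext
    simp only
    apply Equiv.ext
    intro i
    rw [decPerm_apply]
    exact dec_enc σ hS i
  right_inv := enc_dec

/-! ### Counting -/

theorem stmt_5 (n : ℕ) (hn : 1 ≤ n) :
    Nat.card {π : Equiv.Perm (Fin (2 * n)) // IsDumont4 n π ∧ Avoids π p1342} = 2 ^ (n - 1) := by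
  have h1 : ∀ π : Equiv.Perm (Fin (2 * n)), (IsDumont4 n π ∧ Avoids π p1342) ↔ Tcond π :=
    fun π => char_iff (by omega) π
  calc Nat.card {π : Equiv.Perm (Fin (2 * n)) // IsDumont4 n π ∧ Avoids π p1342}
      = Nat.card {π : Equiv.Perm (Fin (2 * n)) // Tcond π} :=
        Nat.card_congr (Equiv.subtypeEquivRight h1)
    _ = Nat.card {σ : Equiv.Perm (Fin n) // Scond σ} := Nat.card_congr TtoS
    _ = Nat.card (Fin (n - 1) → Bool) := Nat.card_congr StoB
    _ = 2 ^ (n - 1) := by simp [Nat.card_eq_fintype_card]
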